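/- For all natural numbers $d,t$ and every real $x\ge 0$ one has $\frac{1}{\sqrt{t!}}\,\sum_{\mu=0}^{d}\frac{x^{\mu+t}}{\sqrt{\mu!}} \;\le\; \sum_{\mu=0}^{d+t}\frac{x^{\mu}}{\sqrt{\mu!}}\;2^{\mu/2}$. -/

import Mathlib

lemma choose_le_two_pow' (n k : ℕ) : n.choose k ≤ 2 ^ n := by
  rcases le_or_gt k n with h | h
  · calc n.choose k ≤ ∑ i ∈ Finset.range (n + 1), n.choose i :=
        Finset.single_le_sum (fun i _ => Nat.zero_le _)
          (Finset.mem_range.2 (Nat.lt_succ_of_le h))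
    _ = 2 ^ n := Nat.sum_range_choose n
  · rw [Nat.choose_eq_zero_of_lt h]; positivity

/-- The weighted power sum inequality absorbing a shift `t` into the summation range:
`(1/√t!) ∑_{μ≤d} x^{μ+t}/√μ! ≤ ∑_{μ≤d+t} (x^μ/√μ!) 2^{μ/2}` for `x ≥ 0`. -/
theorem stmt_14 (d t : ℕ) (x : ℝ) (hx : 0 ≤ x) :
    (1 / Real.sqrt (Nat.factorial t)) *
        ∑ μ ∈ Finset.range (d + 1), x ^ (μ + t) / Real.sqrt (Nat.factorial μ) ≤
      ∑ μ ∈ Finset.range (d + t + 1),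
        x ^ μ / Real.sqrt (Nat.factorial μ) * Real.sqrt 2 ^ μ := by
  set g : ℕ → ℝ := fun μ => x ^ μ / Real.sqrt (Nat.factorial μ) * Real.sqrt 2 ^ μ with hg
  have hgnn : ∀ μ, 0 ≤ g μ := by
    intro μ
    have h2 := Real.sqrt_nonneg (2 : ℝ)
    have hf := Real.sqrt_nonneg ((Nat.factorial μ : ℝ))
    simp only [hg]
    positivity
  have sqpos : ∀ n : ℕ, 0 < Real.sqrt (Nat.factorial n) := by
    intro n
    apply Real.sqrt_pos.2
    exact_mod_cast Nat.factorial_pos n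
  have key : ∀ μ : ℕ, x ^ (μ + t) / Real.sqrt (Nat.factorial t) / Real.sqrt (Nat.factorial μ)
      ≤ g (μ + t) := by
    intro μ
    have hfac : ((μ + t).factorial : ℝ) ≤ 2 ^ (μ + t) * ((μ.factorial : ℝ) * t.factorial) := by
      have h1 : (μ + t).factorial = (μ + t).choose t * (μ.factorial * t.factorial) := by
        rw [← Nat.add_choose_mul_factorial_mul_factorial μ t, mul_assoc]
      have h2 : (μ + t).choose t ≤ 2 ^ (μ + t) := choose_le_two_pow' _ _
      calc ((μ + t).factorial : ℝ) = ((μ + t).choose t : ℝ) * ((μ.factorial : ℝ) * t.factorial) := by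
            exact_mod_cast congrArg (Nat.cast : ℕ → ℝ) h1
        _ ≤ 2 ^ (μ + t) * ((μ.factorial : ℝ) * t.factorial) :=
            mul_le_mul_of_nonneg_right (by exact_mod_cast h2) (by positivity)
    have hsq : Real.sqrt ((μ + t).factorial)
        ≤ Real.sqrt 2 ^ (μ + t) * (Real.sqrt (μ.factorial) * Real.sqrt (t.factorial)) := by
      have h2 : Real.sqrt (2 ^ (μ + t)) = Real.sqrt 2 ^ (μ + t) := by
        rw [show (2:ℝ) ^ (μ + t) = (Real.sqrt 2 ^ (μ + t)) ^ 2 by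
          rw [← pow_mul, mul_comm, pow_mul, Real.sq_sqrt (by norm_num : (0:ℝ) ≤ 2)],
          Real.sqrt_sq (by positivity)]
      have := Real.sqrt_le_sqrt hfac
      rwa [Real.sqrt_mul (by positivity), Real.sqrt_mul (by positivity : (0:ℝ) ≤ (μ.factorial : ℝ)),
        h2] at this
    have hx' : 0 ≤ x ^ (μ + t) := pow_nonneg hx _
    have hcoef : 1 / (Real.sqrt (Nat.factorial t) * Real.sqrt (Nat.factorial μ))
        ≤ Real.sqrt 2 ^ (μ + t) / Real.sqrt ((μ + t).factorial) := by
      rw [div_le_div_iff₀ (by positivity) (sqpos _)]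
      calc 1 * Real.sqrt ((μ + t).factorial) = Real.sqrt ((μ + t).factorial) := one_mul _
        _ ≤ Real.sqrt 2 ^ (μ + t) * (Real.sqrt (μ.factorial) * Real.sqrt (t.factorial)) := hsq
        _ = Real.sqrt 2 ^ (μ + t) * (Real.sqrt (t.factorial) * Real.sqrt (μ.factorial)) := by ring
    calc x ^ (μ + t) / Real.sqrt (Nat.factorial t) / Real.sqrt (Nat.factorial μ)
        = x ^ (μ + t) * (1 / (Real.sqrt (Nat.factorial t) * Real.sqrt (Nat.factorial μ))) := by
          field_simp
      _ ≤ x ^ (μ + t) * (Real.sqrt 2 ^ (μ + t) / Real.sqrt ((μ + t).factorial)) :=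
          mul_le_mul_of_nonneg_left hcoef hx'
      _ = g (μ + t) := by simp only [hg]; ring
  calc (1 / Real.sqrt (Nat.factorial t)) *
        ∑ μ ∈ Finset.range (d + 1), x ^ (μ + t) / Real.sqrt (Nat.factorial μ)
      = ∑ μ ∈ Finset.range (d + 1),
          x ^ (μ + t) / Real.sqrt (Nat.factorial t) / Real.sqrt (Nat.factorial μ) := by
        rw [Finset.mul_sum]; apply Finset.sum_congr rfl; intro μ _; ring
    _ ≤ ∑ μ ∈ Finset.range (d + 1), g (μ + t) := Finset.sum_le_sum fun μ _ => key μ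
    _ = ∑ ν ∈ (Finset.range (d + 1)).image (· + t), g ν := by
        rw [Finset.sum_image]
        intro a _ b _ h
        simp only at h
        omega
    _ ≤ ∑ μ ∈ Finset.range (d + t + 1), g μ := by
        apply Finset.sum_le_sum_of_subset_of_nonneg
        · intro ν hν
          obtain ⟨μ, hμ, rfl⟩ := Finset.mem_image.1 hν
          simp only [Finset.mem_range] at *
          omega
        · intro i _ _; exact hgnn i
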